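/- arXiv:1005.5266 — 2 statements merged into one kernel-verified Lean document; each statement's English description precedes it below -/
import Mathlib

section
/- Let 𝔤_1 and 𝔤_2 be nonzero finite-dimensional semisimple Lie algebras over an algebraically closed field K of characteristic 0, and for i = 1,2 let V_i be an irreducible 𝔤_i-module with dim_K V_i = r_i ≥ 2. Regard V := V_1 ⊗ V_2 as a module over 𝔤 := 𝔤_1 ⊕ 𝔤_2 via (x_1, x_2)·(v_1 ⊗ v_2) = (x_1 v_1) ⊗ v_2 + v_1 ⊗ (x_2 v_2). If r_1 divides r_2, then (V^{⊗ r_2})^𝔤 ≠ 0; note that r_2 < r_1 r_2 = dim V, so V admits a nonzero 𝔤-invariant in a tensor power of exponent strictly smaller than dim V. -/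
open scoped TensorProduct

/-- The action of an element `(x₁, x₂)` of the direct sum `𝔤₁ ⊕ 𝔤₂` on `V₁ ⊗ V₂`, given by
`(x₁, x₂) · (v₁ ⊗ v₂) = (x₁ v₁) ⊗ v₂ + v₁ ⊗ (x₂ v₂)`. -/
noncomputable def prodTensorAction (K : Type*) [CommRing K]
    (𝔤₁ : Type*) [LieRing 𝔤₁] [LieAlgebra K 𝔤₁]
    (𝔤₂ : Type*) [LieRing 𝔤₂] [LieAlgebra K 𝔤₂]
    (V₁ : Type*) [AddCommGroup V₁] [Module K V₁] [LieRingModule 𝔤₁ V₁] [LieModule K 𝔤₁ V₁]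
    (V₂ : Type*) [AddCommGroup V₂] [Module K V₂] [LieRingModule 𝔤₂ V₂] [LieModule K 𝔤₂ V₂]
    (x : 𝔤₁ × 𝔤₂) : Module.End K (V₁ ⊗[K] V₂) :=
  TensorProduct.map (LieModule.toEnd K 𝔤₁ V₁ x.1) LinearMap.id +
    TensorProduct.map LinearMap.id (LieModule.toEnd K 𝔤₂ V₂ x.2)

/-- The derivation action of `(x₁, x₂) ∈ 𝔤₁ ⊕ 𝔤₂` on the `n`-fold tensor power
`(V₁ ⊗ V₂)^{⊗n}`. -/
noncomputable def prodTensorPowerAction (K : Type*) [CommRing K]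
    (𝔤₁ : Type*) [LieRing 𝔤₁] [LieAlgebra K 𝔤₁]
    (𝔤₂ : Type*) [LieRing 𝔤₂] [LieAlgebra K 𝔤₂]
    (V₁ : Type*) [AddCommGroup V₁] [Module K V₁] [LieRingModule 𝔤₁ V₁] [LieModule K 𝔤₁ V₁]
    (V₂ : Type*) [AddCommGroup V₂] [Module K V₂] [LieRingModule 𝔤₂ V₂] [LieModule K 𝔤₂ V₂]
    (n : ℕ) (x : 𝔤₁ × 𝔤₂) : Module.End K (⨂[K]^n (V₁ ⊗[K] V₂)) :=
  ∑ i : Fin n, PiTensorProduct.map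
    (Function.update (fun _ : Fin n => (LinearMap.id : V₁ ⊗[K] V₂ →ₗ[K] V₁ ⊗[K] V₂)) i
      (prodTensorAction K 𝔤₁ 𝔤₂ V₁ V₂ x))

/-- The subspace `((V₁ ⊗ V₂)^{⊗n})^{𝔤₁ ⊕ 𝔤₂}` of invariants. -/
noncomputable def prodTensorPowerInvariants (K : Type*) [CommRing K]
    (𝔤₁ : Type*) [LieRing 𝔤₁] [LieAlgebra K 𝔤₁]
    (𝔤₂ : Type*) [LieRing 𝔤₂] [LieAlgebra K 𝔤₂]
    (V₁ : Type*) [AddCommGroup V₁] [Module K V₁] [LieRingModule 𝔤₁ V₁] [LieModule K 𝔤₁ V₁]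
    (V₂ : Type*) [AddCommGroup V₂] [Module K V₂] [LieRingModule 𝔤₂ V₂] [LieModule K 𝔤₂ V₂]
    (n : ℕ) : Submodule K (⨂[K]^n (V₁ ⊗[K] V₂)) :=
  ⨅ x : 𝔤₁ × 𝔤₂, LinearMap.ker (prodTensorPowerAction K 𝔤₁ 𝔤₂ V₁ V₂ n x)


namespace Statement5Aux
open PiTensorProduct

/-! ### The derivation action on a tensor power -/

section Dpow

variable {K : Type*} [CommRing K] {M : Type*} [AddCommGroup M] [Module K M] (n : ℕ)

noncomputable def Dpow (f : Module.End K M) : Module.End K (⨂[K]^n M) :=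
  ∑ i : Fin n, PiTensorProduct.map
    (Function.update (fun _ : Fin n => (LinearMap.id : M →ₗ[K] M)) i f)

lemma Dpow_tprod (f : Module.End K M) (v : Fin n → M) :
    Dpow n f (tprod K v) = ∑ i : Fin n, tprod K (Function.update v i (f (v i))) := by
  rw [Dpow, LinearMap.sum_apply]
  refine Finset.sum_congr rfl fun i _ => ?_
  rw [PiTensorProduct.map_tprod]
  congr 1
  funext j
  rcases eq_or_ne j i with rfl | h
  · simp
  · simp [Function.update_of_ne h]

noncomputable def DpowL : Module.End K M →ₗ[K] Module.End K (⨂[K]^n M) where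
  toFun f := Dpow n f
  map_add' f g := by
    ext v
    simp only [LinearMap.add_apply, Dpow_tprod, LinearMap.compMultilinearMap_apply]
    rw [← Finset.sum_add_distrib]
    refine Finset.sum_congr rfl fun i _ => ?_
    exact MultilinearMap.map_update_add _ _ _ _ _
  map_smul' c f := by
    ext v
    simp only [RingHom.id_apply, LinearMap.smul_apply, Dpow_tprod,
      LinearMap.compMultilinearMap_apply, Finset.smul_sum]
    refine Finset.sum_congr rfl fun i _ => ?_
    exact MultilinearMap.map_update_smul _ _ _ _ _

lemma DpowL_apply (f : Module.End K M) : DpowL n f = Dpow n f := rfl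

end Dpow


section Key

variable {K : Type*} [Field K] {M : Type*} [AddCommGroup M] [Module K M]

/-- product of signs, as an element of `K` -/
noncomputable def sgnProd (K : Type*) [Field K] {k r : ℕ}
    (σ : Fin k → Equiv.Perm (Fin r)) : K :=
  ∏ s : Fin k, ((Equiv.Perm.sign (σ s) : ℤ) : K)

noncomputable def altTensor (n k r : ℕ) (e : Fin n ≃ Fin k × Fin r)
    (b : Module.Basis (Fin r) K M) : ⨂[K]^n M :=
  ∑ σ : Fin k → Equiv.Perm (Fin r),
    (sgnProd K σ) • tprod K fun j => b (σ (e j).1 (e j).2)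

noncomputable def matUnit {r : ℕ} (b : Module.Basis (Fin r) K M) (p q : Fin r) :
    Module.End K M := (b.coord q).smulRight (b p)

lemma matUnit_apply_basis {r : ℕ} (b : Module.Basis (Fin r) K M) (p q t : Fin r) :
    matUnit b p q (b t) = if t = q then b p else 0 := by
  simp [matUnit, Module.Basis.coord_apply, Module.Basis.repr_self, Finsupp.single_apply, ite_smul]

lemma Dpow_matUnit_altTensor (n k r : ℕ) (e : Fin n ≃ Fin k × Fin r)
    (b : Module.Basis (Fin r) K M) (p q : Fin r) :
    Dpow n (matUnit b p q) (altTensor n k r e b) =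
      (if p = q then (k : K) else 0) • altTensor n k r e b := by
  classical
  rw [altTensor, map_sum]
  simp only [LinearMap.map_smul, Dpow_tprod]
  have step1 : ∀ σ : Fin k → Equiv.Perm (Fin r),
      (∑ i : Fin n, tprod K (Function.update (fun j => b (σ (e j).1 (e j).2)) i
        (matUnit b p q (b (σ (e i).1 (e i).2))))) =
      ∑ s : Fin k, tprod K (Function.update (fun j => b (σ (e j).1 (e j).2))
        (e.symm (s, (σ s)⁻¹ q)) (b p)) := by
    intro σ
    rw [← Equiv.sum_comp e.symm
      (fun i => tprod K (Function.update (fun j => b (σ (e j).1 (e j).2)) i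
        (matUnit b p q (b (σ (e i).1 (e i).2)))))]
    rw [Fintype.sum_prod_type]
    refine Finset.sum_congr rfl fun s _ => ?_
    have key : ∀ t : Fin r,
        tprod K (Function.update (fun j => b (σ (e j).1 (e j).2)) (e.symm (s, t))
          (matUnit b p q (b (σ (e (e.symm (s, t))).1 (e (e.symm (s, t))).2)))) =
        if t = (σ s)⁻¹ q then
          tprod K (Function.update (fun j => b (σ (e j).1 (e j).2)) (e.symm (s, t)) (b p))
        else 0 := by
      intro t
      rw [e.apply_symm_apply]
      simp only [matUnit_apply_basis]
      rcases eq_or_ne t ((σ s)⁻¹ q) with rfl | h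
      · simp
      · have : ¬ (σ s t = q) := fun hc => h (by simp [← hc])
        simp [this, show t ≠ (σ s).symm q from h]
    simp only [key]
    simp
  simp only [step1]
  rcases eq_or_ne p q with rfl | hpq
  · -- diagonal case: each term reproduces the tensor `k` times
    have upd : ∀ (σ : Fin k → Equiv.Perm (Fin r)) (s : Fin k),
        Function.update (fun j => b (σ (e j).1 (e j).2)) (e.symm (s, (σ s)⁻¹ p)) (b p) =
          fun j => b (σ (e j).1 (e j).2) := by
      intro σ s
      have : b p = b (σ (e (e.symm (s, (σ s)⁻¹ p))).1 (e (e.symm (s, (σ s)⁻¹ p))).2) := by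
        simp
      rw [this, Function.update_eq_self]
    simp only [upd, Finset.sum_const, Finset.card_univ, Fintype.card_fin, if_pos rfl]
    rw [Finset.smul_sum]
    refine Finset.sum_congr rfl fun σ _ => ?_
    rw [smul_comm]
    simp [← Nat.cast_smul_eq_nsmul K]
  · -- off-diagonal case: terms cancel in pairs
    rw [if_neg hpq, zero_smul]
    have hne : ∀ σ : Equiv.Perm (Fin r), σ⁻¹ p ≠ σ⁻¹ q := by
      intro σ hc
      exact hpq (by simpa using congrArg σ hc)
    simp only [Finset.smul_sum]
    rw [Finset.sum_comm]
    refine Finset.sum_eq_zero fun s _ => ?_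
    set F : (Fin k → Equiv.Perm (Fin r)) → ⨂[K]^n M := fun σ =>
      sgnProd K σ • tprod K (Function.update (fun j => b (σ (e j).1 (e j).2))
        (e.symm (s, (σ s)⁻¹ q)) (b p)) with hF
    show ∑ σ : Fin k → Equiv.Perm (Fin r), F σ = 0
    set g : (Fin k → Equiv.Perm (Fin r)) → (Fin k → Equiv.Perm (Fin r)) := fun σ =>
      Function.update σ s (σ s * Equiv.swap ((σ s)⁻¹ p) ((σ s)⁻¹ q)) with hg
    have hgs : ∀ σ, g σ s = σ s * Equiv.swap ((σ s)⁻¹ p) ((σ s)⁻¹ q) := by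
      intro σ; simp [hg]
    have hginv_q : ∀ σ : Fin k → Equiv.Perm (Fin r), (g σ s)⁻¹ q = (σ s)⁻¹ p := by
      intro σ
      rw [hgs, mul_inv_rev, Equiv.Perm.mul_apply, Equiv.swap_inv, Equiv.swap_apply_right]
    have hginv_p : ∀ σ : Fin k → Equiv.Perm (Fin r), (g σ s)⁻¹ p = (σ s)⁻¹ q := by
      intro σ
      rw [hgs, mul_inv_rev, Equiv.Perm.mul_apply, Equiv.swap_inv, Equiv.swap_apply_left]
    have hsgn : ∀ σ, sgnProd K (g σ) = - sgnProd K σ := by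
      intro σ
      have hupd : (fun s' => ((Equiv.Perm.sign (g σ s') : ℤ) : K)) =
          Function.update (fun s' => ((Equiv.Perm.sign (σ s') : ℤ) : K)) s
            ((Equiv.Perm.sign (g σ s) : ℤ) : K) := by
        funext s'
        rcases eq_or_ne s' s with rfl | hs'
        · simp
        · rw [Function.update_of_ne hs', hg]
          simp [Function.update_of_ne hs']
      rw [sgnProd, hupd, Finset.prod_update_of_mem (Finset.mem_univ s)]
      rw [sgnProd, ← Finset.mul_prod_erase Finset.univ _ (Finset.mem_univ s),
        Finset.sdiff_singleton_eq_erase, ← neg_mul]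
      congr 1
      rw [hgs, _root_.map_mul, Equiv.Perm.sign_swap (hne (σ s))]
      push_cast
      ring
    have htens : ∀ σ : Fin k → Equiv.Perm (Fin r),
        Function.update (fun j => b (g σ (e j).1 (e j).2)) (e.symm (s, (g σ s)⁻¹ q)) (b p) =
          Function.update (fun j => b (σ (e j).1 (e j).2)) (e.symm (s, (σ s)⁻¹ q)) (b p) := by
      intro σ
      rw [hginv_q]
      funext j
      rcases eq_or_ne j (e.symm (s, (σ s)⁻¹ p)) with rfl | h1
      · rw [Function.update_self]
        have h2 : e.symm ((s, (σ s)⁻¹ p)) ≠ e.symm ((s, (σ s)⁻¹ q)) :=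
          fun hc => hne (σ s) (by simpa using e.symm.injective hc)
        rw [Function.update_of_ne h2]
        simp
      · rw [Function.update_of_ne h1]
        rcases eq_or_ne j (e.symm (s, (σ s)⁻¹ q)) with rfl | h2
        · rw [Function.update_self]
          simp [hgs, Equiv.Perm.mul_apply, Equiv.swap_apply_right, Equiv.apply_symm_apply]
        · rw [Function.update_of_ne h2]
          rcases eq_or_ne (e j).1 s with hs1 | hs1
          · have ht1 : (e j).2 ≠ (σ s)⁻¹ p := by
              intro hc
              apply h1
              rw [← hc, ← hs1, Prod.mk.eta, Equiv.symm_apply_apply]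
            have ht2 : (e j).2 ≠ (σ s)⁻¹ q := by
              intro hc
              apply h2
              rw [← hc, ← hs1, Prod.mk.eta, Equiv.symm_apply_apply]
            rw [hs1]
            simp [hg, Equiv.Perm.mul_apply, Equiv.swap_apply_of_ne_of_ne (show (e j).2 ≠ (σ s).symm p from ht1)
                (show (e j).2 ≠ (σ s).symm q from ht2)]
          · simp [hg, Function.update_of_ne hs1]
    have hginv : ∀ σ, g (g σ) = σ := by
      intro σ
      funext s'
      rcases eq_or_ne s' s with rfl | hs'
      · rw [hgs (g σ), hginv_q σ, hginv_p σ, hgs σ,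
          Equiv.swap_comm ((σ s')⁻¹ q) ((σ s')⁻¹ p), mul_assoc, Equiv.swap_mul_self, mul_one]
      · simp [hg, Function.update_of_ne hs']
    have hmove : ∀ σ, F σ + F (g σ) = 0 := by
      intro σ
      rw [hF]
      simp only
      rw [htens σ, hsgn σ, neg_smul]
      exact add_neg_cancel _
    have hgne : ∀ σ, F σ ≠ 0 → g σ ≠ σ := by
      intro σ _ hc
      have hcs := congrFun hc s
      rw [hgs] at hcs
      rw [mul_eq_left] at hcs
      have := congrArg (fun π : Equiv.Perm (Fin r) => π ((σ s)⁻¹ p)) hcs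
      simp only [Equiv.swap_apply_left, Equiv.Perm.coe_one, id_eq] at this
      exact hne (σ s) this.symm
    exact Finset.sum_ninvolution g hmove hgne (fun σ => Finset.mem_univ _) hginv

end Key


section Key2

variable {K : Type*} [Field K] {M : Type*} [AddCommGroup M] [Module K M]

lemma end_eq_sum_matUnit {r : ℕ} (b : Module.Basis (Fin r) K M) (f : Module.End K M) :
    f = ∑ p : Fin r, ∑ q : Fin r, (b.repr (f (b q)) p) • matUnit b p q := by
  apply b.ext
  intro j
  simp only [LinearMap.sum_apply, LinearMap.smul_apply, matUnit_apply_basis, smul_ite, smul_zero]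
  have : ∀ p : Fin r, ∑ q : Fin r, (if j = q then (b.repr (f (b q)) p) • b p else 0) =
      (b.repr (f (b j)) p) • b p := by
    intro p
    rw [Finset.sum_ite_eq Finset.univ j (fun q => (b.repr (f (b q)) p) • b p)]
    simp
  simp only [this]
  exact (b.sum_repr (f (b j))).symm

lemma Dpow_altTensor_eq_zero [FiniteDimensional K M] (n k r : ℕ) (e : Fin n ≃ Fin k × Fin r)
    (b : Module.Basis (Fin r) K M) (f : Module.End K M) (hf : LinearMap.trace K M f = 0) :
    Dpow n f (altTensor n k r e b) = 0 := by
  have htr : ∑ p : Fin r, b.repr (f (b p)) p = 0 := by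
    rw [LinearMap.trace_eq_matrix_trace K b f] at hf
    simpa [Matrix.trace, Matrix.diag, LinearMap.toMatrix_apply] using hf
  have hd : Dpow n f (altTensor n k r e b) = DpowL n f (altTensor n k r e b) := rfl
  have expand : DpowL n f (altTensor n k r e b) =
      ∑ p : Fin r, ∑ q : Fin r, (b.repr (f (b q)) p) •
        (if p = q then (k : K) else 0) • altTensor n k r e b := by
    conv_lhs => rw [end_eq_sum_matUnit b f]
    rw [map_sum, LinearMap.sum_apply]
    refine Finset.sum_congr rfl fun p _ => ?_
    rw [map_sum, LinearMap.sum_apply]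
    refine Finset.sum_congr rfl fun q _ => ?_
    rw [map_smul, LinearMap.smul_apply, DpowL_apply, Dpow_matUnit_altTensor]
  rw [hd, expand]
  have collapse : ∀ p : Fin r, ∑ q : Fin r,
      (b.repr (f (b q)) p) • (if p = q then (k : K) else 0) • altTensor n k r e b =
      (b.repr (f (b p)) p) • (k : K) • altTensor n k r e b := by
    intro p
    have hterm : ∀ q : Fin r,
        (b.repr (f (b q)) p) • (if p = q then (k : K) else 0) • altTensor n k r e b =
          if p = q then (b.repr (f (b q)) p) • (k : K) • altTensor n k r e b else 0 := by
      intro q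
      by_cases h : p = q <;> simp [h]
    rw [Finset.sum_congr rfl fun q _ => hterm q]
    rw [Finset.sum_ite_eq Finset.univ p
      (fun q => (b.repr (f (b q)) p) • (k : K) • altTensor n k r e b)]
    simp
  rw [Finset.sum_congr rfl fun p _ => collapse p]
  rw [← Finset.sum_smul, htr, zero_smul]

end Key2

section Equivariance

variable {K : Type*} [CommRing K] {M N : Type*} [AddCommGroup M] [Module K M]
  [AddCommGroup N] [Module K N]

/-- the canonical bilinear combination map `(⨂ⁿ M) → (⨂ⁿ N) → ⨂ⁿ (M ⊗ N)` -/
noncomputable def combineMap (n : ℕ) :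
    (⨂[K]^n M) →ₗ[K] (⨂[K]^n N) →ₗ[K] ⨂[K]^n (M ⊗[K] N) :=
  PiTensorProduct.map₂ (fun _ => TensorProduct.mk K M N)

lemma combineMap_tprod_tprod (n : ℕ) (u : Fin n → M) (v : Fin n → N) :
    combineMap n (tprod K u) (tprod K v) = tprod K fun j => u j ⊗ₜ[K] v j :=
  PiTensorProduct.map₂_tprod_tprod _ _ _

lemma combineMap_equivariant_tprod (n : ℕ) (f : Module.End K M) (g : Module.End K N)
    (u : Fin n → M) (v : Fin n → N) :
    Dpow n (TensorProduct.map f LinearMap.id + TensorProduct.map LinearMap.id g)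
        (combineMap n (tprod K u) (tprod K v)) =
      combineMap n (Dpow n f (tprod K u)) (tprod K v) +
        combineMap n (tprod K u) (Dpow n g (tprod K v)) := by
  rw [combineMap_tprod_tprod, Dpow_tprod, Dpow_tprod, Dpow_tprod]
  rw [map_sum, LinearMap.sum_apply, map_sum, ← Finset.sum_add_distrib]
  refine Finset.sum_congr rfl fun i _ => ?_
  have hval : (TensorProduct.map f (LinearMap.id : N →ₗ[K] N) +
      TensorProduct.map (LinearMap.id : M →ₗ[K] M) g)
      (u i ⊗ₜ[K] v i) = f (u i) ⊗ₜ[K] v i + u i ⊗ₜ[K] g (v i) := by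
    simp [TensorProduct.map_tmul]
  have harg : Function.update (fun j => u j ⊗ₜ[K] v j) i
      ((TensorProduct.map f (LinearMap.id : N →ₗ[K] N) +
        TensorProduct.map (LinearMap.id : M →ₗ[K] M) g)
        ((fun j => u j ⊗ₜ[K] v j) i)) =
      Function.update (fun j => u j ⊗ₜ[K] v j) i
        (f (u i) ⊗ₜ[K] v i + u i ⊗ₜ[K] g (v i)) := by
    rw [show ((fun j => u j ⊗ₜ[K] v j) i) = u i ⊗ₜ[K] v i from rfl, hval]
  rw [harg, MultilinearMap.map_update_add]
  congr 1
  · rw [combineMap_tprod_tprod]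
    congr 1
    funext j
    rcases eq_or_ne j i with rfl | h
    · simp
    · simp [Function.update_of_ne h]
  · rw [combineMap_tprod_tprod]
    congr 1
    funext j
    rcases eq_or_ne j i with rfl | h
    · simp
    · simp [Function.update_of_ne h]

lemma combineMap_equivariant (n : ℕ) (f : Module.End K M) (g : Module.End K N)
    (x : ⨂[K]^n M) (y : ⨂[K]^n N) :
    Dpow n (TensorProduct.map f LinearMap.id + TensorProduct.map LinearMap.id g)
        (combineMap n x y) =
      combineMap n (Dpow n f x) y + combineMap n x (Dpow n g y) := by
  induction x using PiTensorProduct.induction_on with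
  | smul_tprod c u =>
    induction y using PiTensorProduct.induction_on with
    | smul_tprod d v =>
      simp only [map_smul, LinearMap.smul_apply, map_smul, combineMap_equivariant_tprod,
        smul_add]
    | add y₁ y₂ h₁ h₂ =>
      simp only [map_add, LinearMap.add_apply, map_add] at h₁ h₂ ⊢
      rw [h₁, h₂]
      abel
  | add x₁ x₂ h₁ h₂ =>
    simp only [map_add, LinearMap.add_apply, map_add] at h₁ h₂ ⊢
    rw [h₁, h₂]
    abel

end Equivariance

section Perfect

variable (K : Type*) [CommRing K] (L : Type*) [LieRing L] [LieAlgebra K L]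

lemma lcs_one_eq_top_of_isSemisimple [LieAlgebra.IsSemisimple K L] :
    LieModule.lowerCentralSeries K L L 1 = ⊤ := by
  rw [LieModule.lowerCentralSeries_succ, LieModule.lowerCentralSeries_zero]
  rw [eq_top_iff]
  conv_lhs => rw [← LieAlgebra.IsSemisimple.sSup_atoms_eq_top (R := K) (L := L)]
  refine sSup_le fun I hI => ?_
  have h1 : ⁅I, I⁆ = I :=
    lie_eq_self_of_isAtom_of_nonabelian I hI (LieAlgebra.IsSemisimple.non_abelian_of_isAtom I hI)
  calc I = ⁅I, I⁆ := h1.symm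
    _ ≤ ⁅(⊤ : LieIdeal K L), (⊤ : LieIdeal K L)⁆ := LieSubmodule.mono_lie le_top le_top

lemma trace_toEnd_eq_zero_of_isSemisimple [LieAlgebra.IsSemisimple K L]
    (M : Type*) [AddCommGroup M] [Module K M] [LieRingModule L M] [LieModule K L M]
    (x : L) : LinearMap.trace K M (LieModule.toEnd K L M x) = 0 := by
  refine LieModule.trace_toEnd_eq_zero_of_mem_lcs K L M (k := 1) le_rfl ?_
  rw [lcs_one_eq_top_of_isSemisimple]
  trivial

end Perfect

section Nonzero

variable {K : Type*} [Field K] {M N : Type*} [AddCommGroup M] [Module K M]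
  [AddCommGroup N] [Module K N]

lemma combineMap_altTensor_ne_zero (n k₁ r₁ k₂ r₂ : ℕ)
    (e₁ : Fin n ≃ Fin k₁ × Fin r₁) (e₂ : Fin n ≃ Fin k₂ × Fin r₂)
    (b₁ : Module.Basis (Fin r₁) K M) (b₂ : Module.Basis (Fin r₂) K N) :
    combineMap n (altTensor n k₁ r₁ e₁ b₁) (altTensor n k₂ r₂ e₂ b₂) ≠ 0 := by
  classical
  set lam : (⨂[K]^n (M ⊗[K] N)) →ₗ[K] K :=
    PiTensorProduct.lift ((MultilinearMap.mkPiAlgebra K (Fin n) K).compLinearMap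
      (fun j => (LinearMap.mul' K K) ∘ₗ
        TensorProduct.map (b₁.coord (e₁ j).2) (b₂.coord (e₂ j).2))) with hlam
  have hlam_tprod : ∀ (σ : Fin k₁ → Equiv.Perm (Fin r₁)) (τ : Fin k₂ → Equiv.Perm (Fin r₂)),
      lam (tprod K fun j => b₁ (σ (e₁ j).1 (e₁ j).2) ⊗ₜ[K] b₂ (τ (e₂ j).1 (e₂ j).2)) =
      ∏ j : Fin n, (b₁.repr (b₁ (σ (e₁ j).1 (e₁ j).2)) (e₁ j).2) *
        (b₂.repr (b₂ (τ (e₂ j).1 (e₂ j).2)) (e₂ j).2) := by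
    intro σ τ
    rw [hlam, PiTensorProduct.lift.tprod]
    simp [MultilinearMap.compLinearMap_apply, MultilinearMap.mkPiAlgebra_apply,
      TensorProduct.map_tmul, LinearMap.mul'_apply, Module.Basis.coord_apply]
  have hexp : combineMap n (altTensor n k₁ r₁ e₁ b₁) (altTensor n k₂ r₂ e₂ b₂) =
      ∑ σ : Fin k₁ → Equiv.Perm (Fin r₁), ∑ τ : Fin k₂ → Equiv.Perm (Fin r₂),
        (sgnProd K σ * sgnProd K τ) •
          tprod K (fun j => b₁ (σ (e₁ j).1 (e₁ j).2) ⊗ₜ[K] b₂ (τ (e₂ j).1 (e₂ j).2)) := by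
    rw [altTensor, altTensor]
    rw [map_sum (combineMap n)
      (fun σ => (sgnProd K σ : K) • tprod K fun j => b₁ (σ (e₁ j).1 (e₁ j).2)) Finset.univ,
      LinearMap.sum_apply]
    refine Finset.sum_congr rfl fun σ _ => ?_
    rw [map_smul (combineMap n), LinearMap.smul_apply,
      map_sum (combineMap n (tprod K fun j => b₁ (σ (e₁ j).1 (e₁ j).2)))
        (fun τ => (sgnProd K τ : K) • tprod K fun j => b₂ (τ (e₂ j).1 (e₂ j).2)) Finset.univ,
      Finset.smul_sum]
    refine Finset.sum_congr rfl fun τ _ => ?_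
    rw [map_smul, combineMap_tprod_tprod, smul_smul]
  have hval : lam (combineMap n (altTensor n k₁ r₁ e₁ b₁) (altTensor n k₂ r₂ e₂ b₂)) = 1 := by
    rw [hexp, map_sum]
    have hP0 : ∀ (σ : Fin k₁ → Equiv.Perm (Fin r₁)) (τ : Fin k₂ → Equiv.Perm (Fin r₂)),
        (σ ≠ fun _ => 1) ∨ (τ ≠ fun _ => 1) →
        (∏ j : Fin n, (b₁.repr (b₁ (σ (e₁ j).1 (e₁ j).2)) (e₁ j).2) *
          (b₂.repr (b₂ (τ (e₂ j).1 (e₂ j).2)) (e₂ j).2)) = 0 := by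
      intro σ τ h
      rcases h with h | h
      · obtain ⟨s, hs⟩ := Function.ne_iff.mp h
        obtain ⟨u, hu⟩ := Function.ne_iff.mp (fun hc => hs (Equiv.ext fun u => congrFun hc u))
        have hu' : σ s u ≠ u := by simpa using hu
        refine Finset.prod_eq_zero (Finset.mem_univ (e₁.symm (s, u))) ?_
        rw [Equiv.apply_symm_apply]
        rw [Module.Basis.repr_self, Finsupp.single_apply, if_neg hu', zero_mul]
      · obtain ⟨s, hs⟩ := Function.ne_iff.mp h
        obtain ⟨u, hu⟩ := Function.ne_iff.mp (fun hc => hs (Equiv.ext fun u => congrFun hc u))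
        have hu' : τ s u ≠ u := by simpa using hu
        refine Finset.prod_eq_zero (Finset.mem_univ (e₂.symm (s, u))) ?_
        rw [Equiv.apply_symm_apply]
        rw [Module.Basis.repr_self (i := τ s u), Finsupp.single_apply, if_neg hu', mul_zero]
    have houter : ∀ σ : Fin k₁ → Equiv.Perm (Fin r₁), σ ≠ (fun _ => 1) →
        ∑ τ : Fin k₂ → Equiv.Perm (Fin r₂),
          lam ((sgnProd K σ * sgnProd K τ) •
            tprod K (fun j => b₁ (σ (e₁ j).1 (e₁ j).2) ⊗ₜ[K] b₂ (τ (e₂ j).1 (e₂ j).2))) = 0 := by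
      intro σ hσ
      refine Finset.sum_eq_zero fun τ _ => ?_
      rw [map_smul, hlam_tprod, hP0 σ τ (Or.inl hσ), smul_zero]
    rw [Finset.sum_congr rfl fun σ _ => map_sum lam _ Finset.univ]
    rw [Finset.sum_eq_single (fun _ => 1) (fun σ _ hσ => houter σ hσ)
      (fun h => absurd (Finset.mem_univ _) h)]
    rw [Finset.sum_eq_single (fun _ => 1) (fun τ _ hτ => by
      rw [map_smul]
      simp only [hlam_tprod (fun _ => 1) τ]
      rw [hP0 (fun _ => 1) τ (Or.inr hτ), smul_zero])
      (fun h => absurd (Finset.mem_univ _) h)]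
    rw [map_smul]
    simp only [hlam_tprod (fun _ => 1) (fun _ => 1)]
    have h1 : sgnProd (k := k₁) (r := r₁) K (fun _ => 1) = 1 := by
      simp [sgnProd]
    have h2 : sgnProd (k := k₂) (r := r₂) K (fun _ => 1) = 1 := by
      simp [sgnProd]
    rw [h1, h2, one_mul, one_smul]
    refine Finset.prod_eq_one fun j _ => ?_
    simp [Module.Basis.repr_self]
  intro hc
  rw [hc, map_zero] at hval
  exact zero_ne_one hval

end Nonzero

end Statement5Aux

/-- Let `𝔤₁` and `𝔤₂` be nonzero finite-dimensional semisimple Lie algebras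
over an algebraically closed field `K` of characteristic `0`, and for `i = 1,2` let `Vᵢ` be an
irreducible `𝔤ᵢ`-module with `dim_K Vᵢ = rᵢ ≥ 2`. Regard `V := V₁ ⊗ V₂` as a module over
`𝔤 := 𝔤₁ ⊕ 𝔤₂` in the natural way. If `r₁ ∣ r₂`, then `(V^{⊗r₂})^𝔤 ≠ 0`; since
`r₂ < r₁r₂ = dim V`, the module `V` admits a nonzero `𝔤`-invariant in a tensor power of
exponent strictly smaller than `dim V`. -/
theorem invariants_ne_bot_of_dvd
    (K : Type*) [Field K] [IsAlgClosed K] [CharZero K]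
    (𝔤₁ : Type*) [LieRing 𝔤₁] [LieAlgebra K 𝔤₁] [FiniteDimensional K 𝔤₁] [Nontrivial 𝔤₁]
    [LieAlgebra.IsSemisimple K 𝔤₁]
    (𝔤₂ : Type*) [LieRing 𝔤₂] [LieAlgebra K 𝔤₂] [FiniteDimensional K 𝔤₂] [Nontrivial 𝔤₂]
    [LieAlgebra.IsSemisimple K 𝔤₂]
    (V₁ : Type*) [AddCommGroup V₁] [Module K V₁] [LieRingModule 𝔤₁ V₁] [LieModule K 𝔤₁ V₁]
    [FiniteDimensional K V₁] [LieModule.IsIrreducible K 𝔤₁ V₁]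
    (V₂ : Type*) [AddCommGroup V₂] [Module K V₂] [LieRingModule 𝔤₂ V₂] [LieModule K 𝔤₂ V₂]
    [FiniteDimensional K V₂] [LieModule.IsIrreducible K 𝔤₂ V₂]
    (r₁ r₂ : ℕ) (hr₁ : r₁ = Module.finrank K V₁) (hr₂ : r₂ = Module.finrank K V₂)
    (hr₁2 : 2 ≤ r₁) (hr₂2 : 2 ≤ r₂) (hdvd : r₁ ∣ r₂) :
    prodTensorPowerInvariants K 𝔤₁ 𝔤₂ V₁ V₂ r₂ ≠ ⊥ ∧ r₂ < r₁ * r₂ := by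
  classical
  obtain ⟨c, hc⟩ := hdvd
  have hkr : r₂ = c * r₁ := by rw [hc, mul_comm]
  refine ⟨?_, ?_⟩
  case refine_2 =>
    have h0 : 0 < r₂ := by omega
    calc r₂ = 1 * r₂ := (one_mul r₂).symm
      _ < r₁ * r₂ := Nat.mul_lt_mul_of_pos_right (by omega) h0
  let b₁ : Module.Basis (Fin r₁) K V₁ := (Module.finBasis K V₁).reindex (finCongr hr₁.symm)
  let b₂ : Module.Basis (Fin r₂) K V₂ := (Module.finBasis K V₂).reindex (finCongr hr₂.symm)
  let e₁ : Fin r₂ ≃ Fin c × Fin r₁ := (finCongr hkr).trans finProdFinEquiv.symm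
  let e₂ : Fin r₂ ≃ Fin 1 × Fin r₂ := (Equiv.uniqueProd (Fin r₂) (Fin 1)).symm
  set ω₁ := Statement5Aux.altTensor r₂ c r₁ e₁ b₁ with hω₁
  set ω₂ := Statement5Aux.altTensor r₂ 1 r₂ e₂ b₂ with hω₂
  set t := Statement5Aux.combineMap r₂ ω₁ ω₂ with ht
  have ht0 : t ≠ 0 := Statement5Aux.combineMap_altTensor_ne_zero _ _ _ _ _ e₁ e₂ b₁ b₂
  have hmem : t ∈ prodTensorPowerInvariants K 𝔤₁ 𝔤₂ V₁ V₂ r₂ := by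
    rw [prodTensorPowerInvariants, Submodule.mem_iInf]
    intro x
    rw [LinearMap.mem_ker]
    have hact : prodTensorPowerAction K 𝔤₁ 𝔤₂ V₁ V₂ r₂ x =
        Statement5Aux.Dpow r₂ (prodTensorAction K 𝔤₁ 𝔤₂ V₁ V₂ x) := rfl
    have hpa : prodTensorAction K 𝔤₁ 𝔤₂ V₁ V₂ x =
        TensorProduct.map (LieModule.toEnd K 𝔤₁ V₁ x.1) (LinearMap.id : V₂ →ₗ[K] V₂) +
          TensorProduct.map (LinearMap.id : V₁ →ₗ[K] V₁) (LieModule.toEnd K 𝔤₂ V₂ x.2) := rfl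
    rw [hact, hpa, ht, Statement5Aux.combineMap_equivariant]
    rw [hω₁, Statement5Aux.Dpow_altTensor_eq_zero r₂ c r₁ e₁ b₁ _
      (Statement5Aux.trace_toEnd_eq_zero_of_isSemisimple K 𝔤₁ V₁ x.1)]
    rw [hω₂, Statement5Aux.Dpow_altTensor_eq_zero r₂ 1 r₂ e₂ b₂ _
      (Statement5Aux.trace_toEnd_eq_zero_of_isSemisimple K 𝔤₂ V₂ x.2)]
    simp
  rw [Submodule.ne_bot_iff]
  exact ⟨t, hmem, ht0⟩
end

section
/- Let G be a compact, topologically finitely generated subgroup of GL_r(𝒪) and let n_0 ≥ 1 be an integer. Suppose there is an integer k ≥ 0 such that for every n > n_0 the quotient G_n/G_{n+n_0} is isomorphic to (ℤ/p^{n_0}ℤ)^k. Then for every n > n_0, the closure in G of the subgroup generated by the set of p^{n_0}-th powers {g^{p^{n_0}} : g ∈ G_n} equals G_{n+n_0}. -/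
open Matrix

set_option synthInstance.maxHeartbeats 1000000
set_option maxHeartbeats 1000000

/-- The valuation ring `𝒪 = {x : ℂ_p | ‖x‖ ≤ 1}`. -/
def integerSubring (Cp : Type*) [NormedField Cp] [IsUltrametricDist Cp] : Subring Cp where
  carrier := {x | ‖x‖ ≤ 1}
  one_mem' := by simp
  mul_mem' := by
    intro a b (ha : ‖a‖ ≤ 1) (hb : ‖b‖ ≤ 1)
    calc ‖a * b‖ = ‖a‖ * ‖b‖ := norm_mul a b
    _ ≤ 1 := mul_le_one₀ ha (norm_nonneg b) hb
  zero_mem' := by simp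
  add_mem' := by
    intro a b (ha : ‖a‖ ≤ 1) (hb : ‖b‖ ≤ 1)
    exact (IsUltrametricDist.norm_add_le_max a b).trans (max_le ha hb)
  neg_mem' := by
    intro a (ha : ‖a‖ ≤ 1)
    simpa using ha

/-- The ideal `pⁿ𝒪 = {x ∈ 𝒪 : ‖x‖ ≤ p⁻ⁿ}` of the valuation ring `𝒪`. -/
def normIdeal (p : ℕ) (Cp : Type*) [NormedField Cp] [IsUltrametricDist Cp] (n : ℕ) :
    Ideal (integerSubring Cp) where
  carrier := {x | ‖(x : Cp)‖ ≤ ((p : ℝ) ^ n)⁻¹}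
  zero_mem' := by
    show ‖((0 : integerSubring Cp) : Cp)‖ ≤ _
    simp
  add_mem' := by
    intro a b (ha : ‖(a : Cp)‖ ≤ _) (hb : ‖(b : Cp)‖ ≤ _)
    show ‖((a + b : integerSubring Cp) : Cp)‖ ≤ _
    push_cast
    exact (IsUltrametricDist.norm_add_le_max (a : Cp) (b : Cp)).trans (max_le ha hb)
  smul_mem' := by
    intro c x (hx : ‖(x : Cp)‖ ≤ _)
    show ‖((c • x : integerSubring Cp) : Cp)‖ ≤ _
    have hc : ‖(c : Cp)‖ ≤ 1 := c.2
    calc ‖((c • x : integerSubring Cp) : Cp)‖ = ‖(c : Cp)‖ * ‖(x : Cp)‖ := by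
          push_cast [smul_eq_mul]
          exact norm_mul _ _
    _ ≤ 1 * ((p : ℝ) ^ n)⁻¹ := by
          exact mul_le_mul hc hx (norm_nonneg _) zero_le_one
    _ = ((p : ℝ) ^ n)⁻¹ := one_mul _

/-- Reduction modulo `pⁿ` on `GL_r(𝒪)`. -/
def glReduction (p : ℕ) (Cp : Type*) [NormedField Cp] [IsUltrametricDist Cp] (r n : ℕ) :
    GL (Fin r) (integerSubring Cp) →*
      (Matrix (Fin r) (Fin r) ((integerSubring Cp) ⧸ normIdeal p Cp n))ˣ :=
  Units.map ((Ideal.Quotient.mk (normIdeal p Cp n)).mapMatrix).toMonoidHom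

/-- The congruence subgroup `G_n ≤ G`: the kernel in `G` of reduction modulo `pⁿ`;
equivalently `{g ∈ G : every entry of g - 1 has norm ≤ p⁻ⁿ}`. -/
def congrSubgroup (p : ℕ) (Cp : Type*) [NormedField Cp] [IsUltrametricDist Cp] (r : ℕ)
    (G : Subgroup (GL (Fin r) (integerSubring Cp))) (n : ℕ) :
    Subgroup (GL (Fin r) (integerSubring Cp)) :=
  G ⊓ (glReduction p Cp r n).ker

set_option linter.unusedSectionVars false


section Aux

variable {Cp : Type*} [NormedField Cp]


/-- entrywise norm bound -/
def EB {r : ℕ} (A : Matrix (Fin r) (Fin r) Cp) (c : ℝ) : Prop := ∀ i j, ‖A i j‖ ≤ c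

variable {r : ℕ}

theorem EB.mono {A : Matrix (Fin r) (Fin r) Cp} {c d : ℝ} (h : EB A c) (hcd : c ≤ d) :
    EB A d := fun i j => (h i j).trans hcd

variable [IsUltrametricDist Cp]

theorem EB.add {A B : Matrix (Fin r) (Fin r) Cp} {c : ℝ} (hA : EB A c) (hB : EB B c) :
    EB (A + B) c := fun i j => by
  simpa [Matrix.add_apply] using
    (IsUltrametricDist.norm_add_le_max (A i j) (B i j)).trans (max_le (hA i j) (hB i j))

theorem EB.neg {A : Matrix (Fin r) (Fin r) Cp} {c : ℝ} (hA : EB A c) : EB (-A) c := fun i j => by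
  simpa [Matrix.neg_apply] using hA i j

theorem EB.sub {A B : Matrix (Fin r) (Fin r) Cp} {c : ℝ} (hA : EB A c) (hB : EB B c) :
    EB (A - B) c := by
  rw [sub_eq_add_neg]; exact hA.add hB.neg

theorem EB.mul {A B : Matrix (Fin r) (Fin r) Cp} {c d : ℝ} (hc : 0 ≤ c)
    (hA : EB A c) (hB : EB B d) : EB (A * B) (c * d) := by
  intro i j
  rw [Matrix.mul_apply]
  refine IsUltrametricDist.norm_sum_le_of_forall_le_of_nonneg
    (mul_nonneg hc (le_trans (norm_nonneg (B i j)) (hB i j))) ?_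
  intro k _
  rw [norm_mul]
  exact mul_le_mul (hA i k) (hB k j) (norm_nonneg _) hc

theorem EB.pow {A : Matrix (Fin r) (Fin r) Cp} {c : ℝ} (hc : 0 ≤ c) (hA : EB A c) (j : ℕ) :
    EB (A ^ (j + 1)) (c ^ (j + 1)) := by
  induction j with
  | zero => simpa using hA
  | succ j ih =>
      rw [pow_succ, pow_succ]
      exact ih.mul (pow_nonneg hc _) hA

theorem EB.nsmul {A : Matrix (Fin r) (Fin r) Cp} {c d : ℝ} {t : ℕ} (ht : ‖(t : Cp)‖ ≤ d)
    (hA : EB A c) : EB (t • A) (d * c) := by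
  intro i j
  rw [Matrix.smul_apply, nsmul_eq_mul, norm_mul]
  exact mul_le_mul ht (hA i j) (norm_nonneg _) (le_trans (norm_nonneg _) ht)

theorem EB.sum {ι : Type*} {s : Finset ι} {f : ι → Matrix (Fin r) (Fin r) Cp} {c : ℝ}
    (hc : 0 ≤ c) (h : ∀ i ∈ s, EB (f i) c) : EB (∑ i ∈ s, f i) c := by
  intro a b
  rw [Matrix.sum_apply]
  exact IsUltrametricDist.norm_sum_le_of_forall_le_of_nonneg hc fun i hi => h i hi a b


/-- the coefficient matrix over `Cp` of an element of `GL_r(𝒪)` -/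
def matCp {r : ℕ} (g : GL (Fin r) (integerSubring Cp)) : Matrix (Fin r) (Fin r) Cp :=
  ((integerSubring Cp).subtype.mapMatrix :
    Matrix (Fin r) (Fin r) (integerSubring Cp) →+* Matrix (Fin r) (Fin r) Cp)
    (g : Matrix (Fin r) (Fin r) (integerSubring Cp))

theorem matCp_apply (g : GL (Fin r) (integerSubring Cp)) (i j : Fin r) :
    matCp g i j = ((g : Matrix (Fin r) (Fin r) (integerSubring Cp)) i j : Cp) := rfl

theorem matCp_mul (g h : GL (Fin r) (integerSubring Cp)) :
    matCp (g * h) = matCp g * matCp h := by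
  rw [matCp, matCp, matCp, Units.val_mul, _root_.map_mul]

theorem matCp_one : matCp (1 : GL (Fin r) (integerSubring Cp)) = 1 := by
  rw [matCp, Units.val_one, _root_.map_one]

theorem matCp_pow (g : GL (Fin r) (integerSubring Cp)) (t : ℕ) :
    matCp (g ^ t) = matCp g ^ t := by
  rw [matCp, matCp, Units.val_pow_eq_pow_val, _root_.map_pow]

theorem matCp_EB_one (g : GL (Fin r) (integerSubring Cp)) : EB (matCp g) 1 := fun i j =>
  ((g : Matrix (Fin r) (Fin r) (integerSubring Cp)) i j).2

theorem matCp_inv_mul (g : GL (Fin r) (integerSubring Cp)) :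
    matCp g⁻¹ * matCp g = 1 := by
  rw [← matCp_mul, inv_mul_cancel, matCp_one]

theorem one_entry (i j : Fin r) :
    (((1 : Matrix (Fin r) (Fin r) (integerSubring Cp)) i j : integerSubring Cp) : Cp) =
      (1 : Matrix (Fin r) (Fin r) Cp) i j := by
  rcases eq_or_ne i j with h | h <;> simp [Matrix.one_apply, h]

theorem mem_ker_iff {p n : ℕ} (g : GL (Fin r) (integerSubring Cp)) :
    g ∈ (glReduction p Cp r n).ker ↔ EB (matCp g - 1) (((p : ℝ) ^ n)⁻¹) := by
  rw [MonoidHom.mem_ker, glReduction, Units.ext_iff, Units.coe_map, Units.val_one,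
    RingHom.toMonoidHom_eq_coe, MonoidHom.coe_coe,
    show (1 : Matrix (Fin r) (Fin r) ((integerSubring Cp) ⧸ normIdeal p Cp n)) =
      (Ideal.Quotient.mk (normIdeal p Cp n)).mapMatrix
        (1 : Matrix (Fin r) (Fin r) (integerSubring Cp)) from (_root_.map_one _).symm,
    ← Matrix.ext_iff]
  simp only [RingHom.mapMatrix_apply, Matrix.map_apply]
  constructor
  · intro h i j
    have h2 := h i j
    rw [Ideal.Quotient.mk_eq_mk_iff_sub_mem] at h2
    have h3 : ‖(((g : Matrix (Fin r) (Fin r) (integerSubring Cp)) i j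
        - (1 : Matrix (Fin r) (Fin r) (integerSubring Cp)) i j : integerSubring Cp) : Cp)‖
        ≤ ((p : ℝ) ^ n)⁻¹ := h2
    rw [Matrix.sub_apply, matCp_apply, ← one_entry i j]
    push_cast at h3 ⊢
    exact h3
  · intro h i j
    rw [Ideal.Quotient.mk_eq_mk_iff_sub_mem]
    have h2 := h i j
    rw [Matrix.sub_apply, matCp_apply, ← one_entry i j] at h2
    show ‖(((g : Matrix (Fin r) (Fin r) (integerSubring Cp)) i j
        - (1 : Matrix (Fin r) (Fin r) (integerSubring Cp)) i j : integerSubring Cp) : Cp)‖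
        ≤ ((p : ℝ) ^ n)⁻¹
    push_cast
    exact h2

end Aux
section Aux2

variable {Cp : Type*} [NormedField Cp] {r : ℕ} [IsUltrametricDist Cp]

theorem eps_le {p : ℕ} (hp1 : 1 < (p : ℝ)) {a b : ℕ} (h : a ≤ b) :
    ((p : ℝ) ^ b)⁻¹ ≤ ((p : ℝ) ^ a)⁻¹ := by
  apply inv_anti₀ (by positivity)
  exact pow_le_pow_right₀ hp1.le h

theorem eps_mul {p : ℕ} (a b : ℕ) :
    ((p : ℝ) ^ a)⁻¹ * ((p : ℝ) ^ b)⁻¹ = ((p : ℝ) ^ (a + b))⁻¹ := by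
  rw [pow_add, mul_inv]

theorem norm_q {p : ℕ} (hnorm : ‖(p : Cp)‖ = (p : ℝ)⁻¹) (t : ℕ) :
    ‖((p ^ t : ℕ) : Cp)‖ = ((p : ℝ) ^ t)⁻¹ := by
  push_cast
  rw [norm_pow, hnorm, inv_pow]

theorem pow_estimate {p n₀ m : ℕ} (hp1 : 1 < (p : ℝ)) (hq2 : 2 ≤ p ^ n₀) (hm : n₀ + 1 ≤ m)
    {A : Matrix (Fin r) (Fin r) Cp} (hA : EB A (((p : ℝ) ^ m)⁻¹)) :
    EB ((1 + A) ^ (p ^ n₀) - 1 - (p ^ n₀) • A) (((p : ℝ) ^ (m + n₀ + 1))⁻¹) := by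
  have hepsm : (0 : ℝ) ≤ ((p : ℝ) ^ m)⁻¹ := by positivity
  obtain ⟨s, hs⟩ : ∃ s, p ^ n₀ = s + 2 := ⟨p ^ n₀ - 2, by omega⟩
  rw [hs, add_comm (1 : Matrix (Fin r) (Fin r) Cp) A, (Commute.one_right A).add_pow]
  rw [Finset.sum_range_succ', Finset.sum_range_succ']
  simp only [pow_zero, one_pow, mul_one, one_mul, Nat.choose_zero_right, Nat.cast_one,
    zero_add, pow_one, Nat.choose_one_right]
  have hns : A * ((s + 2 : ℕ) : Matrix (Fin r) (Fin r) Cp) = (s + 2) • A := by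
    rw [nsmul_eq_mul]
    exact (Nat.cast_commute (s + 2) A).eq.symm
  rw [hns]
  have hcancel : ∀ X Y : Matrix (Fin r) (Fin r) Cp, X + Y + 1 - 1 - Y = X := by
    intro X Y; abel
  rw [hcancel]
  refine EB.sum (by positivity) ?_
  intro i hi
  have hterm : A ^ (i + 1 + 1) * (((s + 2).choose (i + 1 + 1) : ℕ) : Matrix (Fin r) (Fin r) Cp)
      = ((s + 2).choose (i + 1 + 1)) • A ^ (i + 1 + 1) := by
    rw [nsmul_eq_mul]
    exact (Nat.cast_commute _ _).eq.symm
  rw [hterm]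
  have h1 : EB (A ^ (i + 1 + 1)) ((((p : ℝ) ^ m)⁻¹) ^ (i + 1 + 1)) := EB.pow hepsm hA (i + 1)
  have h2 := EB.nsmul (t := (s + 2).choose (i + 1 + 1)) (d := 1)
    (IsUltrametricDist.norm_natCast_le_one Cp _) h1
  refine EB.mono h2 ?_
  rw [one_mul]
  calc (((p : ℝ) ^ m)⁻¹) ^ (i + 1 + 1) ≤ (((p : ℝ) ^ m)⁻¹) ^ 2 := by
        apply pow_le_pow_of_le_one hepsm
        · exact inv_le_one_of_one_le₀ (one_le_pow₀ hp1.le)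
        · omega
    _ = ((p : ℝ) ^ (m * 2))⁻¹ := by rw [pow_mul, inv_pow]
    _ ≤ ((p : ℝ) ^ (m + n₀ + 1))⁻¹ := eps_le hp1 (by omega)

end Aux2
section Aux3

variable {Cp : Type*} [NormedField Cp] {r : ℕ} [IsUltrametricDist Cp]

theorem matCp_pow_sub_one {p n₀ m : ℕ} (hp1 : 1 < (p : ℝ)) (hq2 : 2 ≤ p ^ n₀) (hm : n₀ + 1 ≤ m)
    {g : GL (Fin r) (integerSubring Cp)} (hg : EB (matCp g - 1) (((p : ℝ) ^ m)⁻¹)) :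
    EB (matCp (g ^ (p ^ n₀)) - 1 - (p ^ n₀) • (matCp g - 1)) (((p : ℝ) ^ (m + n₀ + 1))⁻¹) := by
  have h := pow_estimate hp1 hq2 hm hg
  have e : (1 : Matrix (Fin r) (Fin r) Cp) + (matCp g - 1) = matCp g := by abel
  rw [e] at h
  rwa [matCp_pow]

theorem matCp_pow_sub_one' {p n₀ m : ℕ} (hp1 : 1 < (p : ℝ)) (hnorm : ‖(p : Cp)‖ = (p : ℝ)⁻¹)
    (hq2 : 2 ≤ p ^ n₀) (hm : n₀ + 1 ≤ m)
    {g : GL (Fin r) (integerSubring Cp)} (hg : EB (matCp g - 1) (((p : ℝ) ^ m)⁻¹)) :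
    EB (matCp (g ^ (p ^ n₀)) - 1) (((p : ℝ) ^ (m + n₀))⁻¹) := by
  have h1 := matCp_pow_sub_one hp1 hq2 hm hg
  have h2 : EB ((p ^ n₀) • (matCp g - 1)) (((p : ℝ) ^ n₀)⁻¹ * ((p : ℝ) ^ m)⁻¹) :=
    EB.nsmul (norm_q hnorm n₀).le hg
  rw [eps_mul] at h2
  have e : matCp (g ^ (p ^ n₀)) - 1
      = (p ^ n₀) • (matCp g - 1) + (matCp (g ^ (p ^ n₀)) - 1 - (p ^ n₀) • (matCp g - 1)) := by
    abel
  rw [e]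
  exact EB.add (EB.mono h2 (eps_le hp1 (by omega))) (EB.mono h1 (eps_le hp1 (by omega)))

theorem wd_estimate {p n₀ n : ℕ} (hp1 : 1 < (p : ℝ)) (hnorm : ‖(p : Cp)‖ = (p : ℝ)⁻¹)
    (hq2 : 2 ≤ p ^ n₀) (hn : n₀ + 1 ≤ n) (g u : GL (Fin r) (integerSubring Cp))
    (hg : EB (matCp g - 1) (((p : ℝ) ^ n)⁻¹)) (hu : EB (matCp u - 1) (((p : ℝ) ^ (n + 1))⁻¹)) :
    EB (matCp ((g ^ (p ^ n₀))⁻¹ * (g * u) ^ (p ^ n₀)) - 1) (((p : ℝ) ^ (n + n₀ + 1))⁻¹) := by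
  have hprod : EB (matCp g * (matCp u - 1)) (((p : ℝ) ^ (n + 1))⁻¹) := by
    have h0 := EB.mul zero_le_one (matCp_EB_one g) hu
    rwa [one_mul] at h0
  have e2 : matCp g * (matCp u - 1) = (matCp (g * u) - 1) - (matCp g - 1) := by
    rw [matCp_mul]; noncomm_ring
  have hh : EB (matCp (g * u) - 1) (((p : ℝ) ^ n)⁻¹) := by
    have e : matCp (g * u) - 1 = (matCp g - 1) + matCp g * (matCp u - 1) := by
      rw [matCp_mul]; noncomm_ring
    rw [e]
    exact EB.add hg (EB.mono hprod (eps_le hp1 (by omega)))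
  have Eg := matCp_pow_sub_one hp1 hq2 hn hg
  have Eh := matCp_pow_sub_one hp1 hq2 hn hh
  have hsm : EB ((p ^ n₀) • (matCp g * (matCp u - 1))) (((p : ℝ) ^ (n + n₀ + 1))⁻¹) := by
    have h0 := EB.nsmul (norm_q hnorm n₀).le hprod
    rw [eps_mul] at h0
    exact EB.mono h0 (eps_le hp1 (by omega))
  have hdiff : EB (matCp ((g * u) ^ (p ^ n₀)) - matCp (g ^ (p ^ n₀)))
      (((p : ℝ) ^ (n + n₀ + 1))⁻¹) := by
    have e : matCp ((g * u) ^ (p ^ n₀)) - matCp (g ^ (p ^ n₀))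
        = (p ^ n₀) • ((matCp (g * u) - 1) - (matCp g - 1))
          + (matCp ((g * u) ^ (p ^ n₀)) - 1 - (p ^ n₀) • (matCp (g * u) - 1))
          - (matCp (g ^ (p ^ n₀)) - 1 - (p ^ n₀) • (matCp g - 1)) := by
      simp only [smul_sub]; abel
    rw [e, ← e2]
    exact EB.sub (EB.add hsm Eh) Eg
  have e3 : matCp ((g ^ (p ^ n₀))⁻¹ * (g * u) ^ (p ^ n₀)) - 1
      = matCp ((g ^ (p ^ n₀))⁻¹) * (matCp ((g * u) ^ (p ^ n₀)) - matCp (g ^ (p ^ n₀))) := by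
    rw [mul_sub, ← matCp_mul, ← matCp_mul, inv_mul_cancel, matCp_one]
  rw [e3]
  have h0 := EB.mul zero_le_one (matCp_EB_one ((g ^ (p ^ n₀))⁻¹)) hdiff
  rwa [one_mul] at h0

theorem inj_estimate {p n₀ n : ℕ} (hp1 : 1 < (p : ℝ)) (hnorm : ‖(p : Cp)‖ = (p : ℝ)⁻¹)
    (hq2 : 2 ≤ p ^ n₀) (hn : n₀ + 1 ≤ n) (g h : GL (Fin r) (integerSubring Cp))
    (hg : EB (matCp g - 1) (((p : ℝ) ^ n)⁻¹)) (hh : EB (matCp h - 1) (((p : ℝ) ^ n)⁻¹))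
    (hgh : EB (matCp ((g ^ (p ^ n₀))⁻¹ * h ^ (p ^ n₀)) - 1) (((p : ℝ) ^ (n + n₀ + 1))⁻¹)) :
    EB (matCp (g⁻¹ * h) - 1) (((p : ℝ) ^ (n + 1))⁻¹) := by
  have hD : EB (matCp (h ^ (p ^ n₀)) - matCp (g ^ (p ^ n₀))) (((p : ℝ) ^ (n + n₀ + 1))⁻¹) := by
    have e : matCp (h ^ (p ^ n₀)) - matCp (g ^ (p ^ n₀))
        = matCp (g ^ (p ^ n₀)) * (matCp ((g ^ (p ^ n₀))⁻¹ * h ^ (p ^ n₀)) - 1) := by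
      rw [mul_sub, ← matCp_mul, mul_inv_cancel_left, mul_one]
    rw [e]
    have h0 := EB.mul zero_le_one (matCp_EB_one (g ^ (p ^ n₀))) hgh
    rwa [one_mul] at h0
  have Eg := matCp_pow_sub_one hp1 hq2 hn hg
  have Eh := matCp_pow_sub_one hp1 hq2 hn hh
  have hsm : EB ((p ^ n₀) • (matCp h - matCp g)) (((p : ℝ) ^ (n + n₀ + 1))⁻¹) := by
    have e : (p ^ n₀) • (matCp h - matCp g)
        = (matCp (h ^ (p ^ n₀)) - matCp (g ^ (p ^ n₀)))
          - (matCp (h ^ (p ^ n₀)) - 1 - (p ^ n₀) • (matCp h - 1))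
          + (matCp (g ^ (p ^ n₀)) - 1 - (p ^ n₀) • (matCp g - 1)) := by
      simp only [smul_sub]; abel
    rw [e]
    exact EB.add (EB.sub hD Eh) Eg
  have hA : EB (matCp h - matCp g) (((p : ℝ) ^ (n + 1))⁻¹) := by
    intro i j
    have h2 := hsm i j
    rw [Matrix.smul_apply, nsmul_eq_mul, norm_mul, norm_q hnorm] at h2
    have heq : ((p : ℝ) ^ (n + n₀ + 1))⁻¹ = ((p : ℝ) ^ n₀)⁻¹ * ((p : ℝ) ^ (n + 1))⁻¹ := by
      rw [eps_mul, show n₀ + (n + 1) = n + n₀ + 1 from by omega]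
    rw [heq] at h2
    exact le_of_mul_le_mul_left h2 (by positivity)
  have e3 : matCp (g⁻¹ * h) - 1 = matCp g⁻¹ * (matCp h - matCp g) := by
    rw [mul_sub, ← matCp_mul, ← matCp_mul, inv_mul_cancel, matCp_one]
  rw [e3]
  have h0 := EB.mul zero_le_one (matCp_EB_one g⁻¹) hA
  rwa [one_mul] at h0

theorem mem_congr {p : ℕ} {G : Subgroup (GL (Fin r) (integerSubring Cp))} {n : ℕ}
    {g : GL (Fin r) (integerSubring Cp)} :
    g ∈ congrSubgroup p Cp r G n ↔ g ∈ G ∧ EB (matCp g - 1) (((p : ℝ) ^ n)⁻¹) := by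
  rw [congrSubgroup, Subgroup.mem_inf, mem_ker_iff]

theorem congr_antitone {p : ℕ} (hp1 : 1 < (p : ℝ)) {G : Subgroup (GL (Fin r) (integerSubring Cp))}
    {a b : ℕ} (h : a ≤ b) : congrSubgroup p Cp r G b ≤ congrSubgroup p Cp r G a := by
  intro g hg
  rw [mem_congr] at hg ⊢
  exact ⟨hg.1, EB.mono hg.2 (eps_le hp1 h)⟩

theorem pow_mem_congr {p n₀ m : ℕ} (hp1 : 1 < (p : ℝ)) (hnorm : ‖(p : Cp)‖ = (p : ℝ)⁻¹)
    (hq2 : 2 ≤ p ^ n₀) (hm : n₀ + 1 ≤ m) {G : Subgroup (GL (Fin r) (integerSubring Cp))}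
    {g : GL (Fin r) (integerSubring Cp)} (hg : g ∈ congrSubgroup p Cp r G m) :
    g ^ (p ^ n₀) ∈ congrSubgroup p Cp r G (m + n₀) := by
  rw [mem_congr] at hg ⊢
  exact ⟨pow_mem hg.1 _, matCp_pow_sub_one' hp1 hnorm hq2 hm hg.2⟩

theorem wd_congr {p n₀ n : ℕ} (hp1 : 1 < (p : ℝ)) (hnorm : ‖(p : Cp)‖ = (p : ℝ)⁻¹)
    (hq2 : 2 ≤ p ^ n₀) (hn : n₀ + 1 ≤ n) {G : Subgroup (GL (Fin r) (integerSubring Cp))}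
    {g h : GL (Fin r) (integerSubring Cp)} (hg : g ∈ congrSubgroup p Cp r G n)
    (hh : h ∈ congrSubgroup p Cp r G n) (hu : g⁻¹ * h ∈ congrSubgroup p Cp r G (n + 1)) :
    (g ^ (p ^ n₀))⁻¹ * h ^ (p ^ n₀) ∈ congrSubgroup p Cp r G (n + n₀ + 1) := by
  rw [mem_congr] at hg hh hu ⊢
  refine ⟨mul_mem (inv_mem (pow_mem hg.1 _)) (pow_mem hh.1 _), ?_⟩
  have h0 := wd_estimate hp1 hnorm hq2 hn g (g⁻¹ * h) hg.2 hu.2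
  rwa [mul_inv_cancel_left] at h0

theorem inj_congr {p n₀ n : ℕ} (hp1 : 1 < (p : ℝ)) (hnorm : ‖(p : Cp)‖ = (p : ℝ)⁻¹)
    (hq2 : 2 ≤ p ^ n₀) (hn : n₀ + 1 ≤ n) {G : Subgroup (GL (Fin r) (integerSubring Cp))}
    {g h : GL (Fin r) (integerSubring Cp)} (hg : g ∈ congrSubgroup p Cp r G n)
    (hh : h ∈ congrSubgroup p Cp r G n)
    (hgh : (g ^ (p ^ n₀))⁻¹ * h ^ (p ^ n₀) ∈ congrSubgroup p Cp r G (n + n₀ + 1)) :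
    g⁻¹ * h ∈ congrSubgroup p Cp r G (n + 1) := by
  rw [mem_congr] at hg hh hgh ⊢
  exact ⟨mul_mem (inv_mem hg.1) hh.1, inj_estimate hp1 hnorm hq2 hn g h hg.2 hh.2 hgh.2⟩

end Aux3
section Aux4

variable {Cp : Type*} [NormedField Cp] {r : ℕ} [IsUltrametricDist Cp]

theorem isClosed_ker {p n : ℕ} :
    IsClosed (((glReduction p Cp r n).ker : Subgroup (GL (Fin r) (integerSubring Cp))) :
      Set (GL (Fin r) (integerSubring Cp))) := by
  have hset : (((glReduction p Cp r n).ker : Subgroup _) : Set (GL (Fin r) (integerSubring Cp)))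
      = ⋂ (i : Fin r) (j : Fin r),
        {g : GL (Fin r) (integerSubring Cp) |
          ‖matCp g i j - (1 : Matrix (Fin r) (Fin r) Cp) i j‖ ≤ ((p : ℝ) ^ n)⁻¹} := by
    ext g
    simp only [SetLike.mem_coe, Set.mem_iInter, Set.mem_setOf_eq, mem_ker_iff]
    constructor
    · intro h i j; have h2 := h i j; rwa [Matrix.sub_apply] at h2
    · intro h i j; rw [Matrix.sub_apply]; exact h i j
  rw [hset]
  refine isClosed_iInter fun i => isClosed_iInter fun j => ?_
  refine isClosed_le ?_ continuous_const
  refine Continuous.norm (Continuous.sub ?_ continuous_const)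
  have hval : Continuous (fun g : GL (Fin r) (integerSubring Cp) =>
      (g : Matrix (Fin r) (Fin r) (integerSubring Cp))) := Units.continuous_val
  have h1 : Continuous (fun g : GL (Fin r) (integerSubring Cp) =>
      (g : Matrix (Fin r) (Fin r) (integerSubring Cp)) i) := (continuous_apply i).comp hval
  have h2 : Continuous (fun g : GL (Fin r) (integerSubring Cp) =>
      (g : Matrix (Fin r) (Fin r) (integerSubring Cp)) i j) := (continuous_apply j).comp h1
  exact continuous_subtype_val.comp h2

theorem tendsto_pow_inv_zero {p : ℕ} (hp1 : 1 < (p : ℝ)) (c : ℕ) :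
    Filter.Tendsto (fun t : ℕ => ((p : ℝ) ^ (c + t))⁻¹) Filter.atTop (nhds 0) := by
  have he : ∀ t : ℕ, ((p : ℝ) ^ c)⁻¹ * ((p : ℝ)⁻¹) ^ t = ((p : ℝ) ^ (c + t))⁻¹ := by
    intro t; rw [pow_add, mul_inv, inv_pow]
  have h0 : Filter.Tendsto (fun t : ℕ => ((p : ℝ)⁻¹) ^ t) Filter.atTop (nhds 0) :=
    tendsto_pow_atTop_nhds_zero_of_lt_one (by positivity) (inv_lt_one_of_one_lt₀ hp1)
  have h1 := h0.const_mul (((p : ℝ) ^ c)⁻¹)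
  rw [mul_zero] at h1
  exact h1.congr he

theorem tendsto_val_one {p c : ℕ} (hp1 : 1 < (p : ℝ)) (v : ℕ → GL (Fin r) (integerSubring Cp))
    (hv : ∀ t, v t ∈ (glReduction p Cp r (c + t)).ker) :
    Filter.Tendsto (fun t => ((v t : Matrix (Fin r) (Fin r) (integerSubring Cp))))
      Filter.atTop (nhds (1 : Matrix (Fin r) (Fin r) (integerSubring Cp))) := by
  refine tendsto_pi_nhds.mpr ?_
  intro i
  refine tendsto_pi_nhds.mpr ?_
  intro j
  rw [tendsto_subtype_rng]
  rw [← tendsto_sub_nhds_zero_iff]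
  refine squeeze_zero_norm ?_ (tendsto_pow_inv_zero hp1 c)
  intro t
  have h2 := (mem_ker_iff (p := p) (n := c + t) (v t)).mp (hv t) i j
  rw [Matrix.sub_apply, matCp_apply, ← one_entry i j] at h2
  exact h2

theorem tendsto_one_of_ker {p c : ℕ} (hp1 : 1 < (p : ℝ))
    (w : ℕ → GL (Fin r) (integerSubring Cp))
    (hw : ∀ j, w j ∈ (glReduction p Cp r (c + j)).ker) :
    Filter.Tendsto w Filter.atTop (nhds 1) := by
  rw [Units.isInducing_embedProduct.tendsto_nhds_iff]
  have h1 := tendsto_val_one hp1 w hw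
  have h2 := tendsto_val_one hp1 (fun j => (w j)⁻¹) (fun j => inv_mem (hw j))
  have h3 := Filter.Tendsto.prodMk_nhds h1
    ((MulOpposite.continuous_op.tendsto _).comp h2)
  have he : (Units.embedProduct (Matrix (Fin r) (Fin r) (integerSubring Cp))) 1
      = (1, MulOpposite.op 1) := rfl
  rw [he]
  exact h3

end Aux4

/-- Let `G` be a compact, topologically finitely generated subgroup of
`GL_r(𝒪)` and `n₀ ≥ 1`.  Suppose there is `k ≥ 0` such that for every `n > n₀` the quotient
`G_n/G_{n+n₀}` is isomorphic to `(ℤ/p^{n₀}ℤ)^k` (expressed below by the existence of a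
surjective homomorphism `G_n → (ℤ/p^{n₀}ℤ)^k` with kernel `G_{n+n₀}`).  Then for every
`n > n₀`, the (topological) closure of the subgroup generated by the `p^{n₀}`-th powers
`{g^{p^{n₀}} : g ∈ G_n}` equals `G_{n+n₀}`.  (Since the compact subgroup `G` is closed,
the closure in `G` agrees with the closure in `GL_r(𝒪)`.) -/
theorem closure_pow_eq_congrSubgroup
    (p : ℕ) (hp : p.Prime)
    (Cp : Type*) [NormedField Cp] [IsUltrametricDist Cp] [IsAlgClosed Cp] [CompleteSpace Cp]
    (hnorm : ‖(p : Cp)‖ = (p : ℝ)⁻¹)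
    (r : ℕ) (G : Subgroup (GL (Fin r) (integerSubring Cp)))
    (hG : IsCompact (G : Set (GL (Fin r) (integerSubring Cp))))
    (hfg : ∃ S : Set (GL (Fin r) (integerSubring Cp)), S.Finite ∧
      (Subgroup.closure S).topologicalClosure = G)
    (n₀ : ℕ) (hn₀ : 1 ≤ n₀) (k : ℕ)
    (hquot : ∀ n : ℕ, n₀ < n →
      ∃ f : ↥(congrSubgroup p Cp r G n) →* Multiplicative (Fin k → ZMod (p ^ n₀)),
        Function.Surjective f ∧
          f.ker = (congrSubgroup p Cp r G (n + n₀)).subgroupOf (congrSubgroup p Cp r G n)) :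
    ∀ n : ℕ, n₀ < n →
      (Subgroup.closure
        ((fun g => g ^ (p ^ n₀)) '' ((congrSubgroup p Cp r G n) :
          Set (GL (Fin r) (integerSubring Cp))))).topologicalClosure =
        congrSubgroup p Cp r G (n + n₀) := by
  intro n hn
  have hp1 : (1 : ℝ) < (p : ℝ) := by exact_mod_cast hp.one_lt
  have hq2 : 2 ≤ p ^ n₀ :=
    le_trans hp.two_le (by simpa using Nat.pow_le_pow_right hp.one_lt.le hn₀)
  -- the key finite-quotient counting step
  have key : ∀ m, n₀ < m → ∀ x ∈ congrSubgroup p Cp r G (m + n₀),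
      ∃ g ∈ congrSubgroup p Cp r G m,
        (g ^ (p ^ n₀))⁻¹ * x ∈ congrSubgroup p Cp r G (m + n₀ + 1) := by
    intro m hm
    haveI : NeZero (p ^ n₀) := ⟨(pow_pos hp.pos n₀).ne'⟩
    have hrel : ∀ t, n₀ < t →
        (congrSubgroup p Cp r G (t + n₀)).relIndex (congrSubgroup p Cp r G t)
          = Nat.card (Multiplicative (Fin k → ZMod (p ^ n₀))) := by
      intro t ht
      obtain ⟨f, hf, hker⟩ := hquot t ht
      have hcong := Nat.card_congr (QuotientGroup.quotientKerEquivOfSurjective f hf).toEquiv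
      rw [hker] at hcong
      exact hcong
    have hcpos : 0 < Nat.card (Multiplicative (Fin k → ZMod (p ^ n₀))) := Nat.card_pos
    have le1 : congrSubgroup p Cp r G (m + n₀) ≤ congrSubgroup p Cp r G (m + 1) :=
      congr_antitone hp1 (by omega)
    have le2 : congrSubgroup p Cp r G (m + 1) ≤ congrSubgroup p Cp r G m :=
      congr_antitone hp1 (by omega)
    have le3 : congrSubgroup p Cp r G (m + n₀ + 1) ≤ congrSubgroup p Cp r G (m + n₀) :=
      congr_antitone hp1 (by omega)
    have t1 := Subgroup.relIndex_mul_relIndex _ _ _ le1 le2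
    rw [hrel m hm] at t1
    have t2 := Subgroup.relIndex_mul_relIndex _ _ _ le3 le1
    have h2 := hrel (m + 1) (by omega)
    rw [show m + 1 + n₀ = m + n₀ + 1 from by omega] at h2
    rw [h2] at t2
    have hbpos : 0 < (congrSubgroup p Cp r G (m + n₀)).relIndex (congrSubgroup p Cp r G (m + 1)) :=
      Nat.pos_of_ne_zero fun h0 => by rw [h0, zero_mul] at t1; omega
    have hcard : (congrSubgroup p Cp r G (m + 1)).relIndex (congrSubgroup p Cp r G m)
        = (congrSubgroup p Cp r G (m + n₀ + 1)).relIndex (congrSubgroup p Cp r G (m + n₀)) := by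
      refine Nat.eq_of_mul_eq_mul_left hbpos ?_
      rw [t1, mul_comm]
      exact t2.symm
    have hmn : n₀ + 1 ≤ m := by omega
    have hpm : ∀ g : ↥(congrSubgroup p Cp r G m),
        (g : GL (Fin r) (integerSubring Cp)) ^ (p ^ n₀) ∈ congrSubgroup p Cp r G (m + n₀) :=
      fun g => pow_mem_congr hp1 hnorm hq2 hmn g.2
    let F : (↥(congrSubgroup p Cp r G m) ⧸
          (congrSubgroup p Cp r G (m + 1)).subgroupOf (congrSubgroup p Cp r G m)) →
        (↥(congrSubgroup p Cp r G (m + n₀)) ⧸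
          (congrSubgroup p Cp r G (m + n₀ + 1)).subgroupOf (congrSubgroup p Cp r G (m + n₀))) :=
      Quotient.lift
        (fun g : ↥(congrSubgroup p Cp r G m) =>
          (QuotientGroup.mk ⟨(g : GL (Fin r) (integerSubring Cp)) ^ (p ^ n₀), hpm g⟩ :
            ↥(congrSubgroup p Cp r G (m + n₀)) ⧸
              (congrSubgroup p Cp r G (m + n₀ + 1)).subgroupOf (congrSubgroup p Cp r G (m + n₀))))
        (by
          intro a b hab
          have hab' := QuotientGroup.leftRel_apply.mp hab
          rw [Subgroup.mem_subgroupOf] at hab'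
          rw [QuotientGroup.eq, Subgroup.mem_subgroupOf]
          show ((a : GL (Fin r) (integerSubring Cp)) ^ (p ^ n₀))⁻¹
              * (b : GL (Fin r) (integerSubring Cp)) ^ (p ^ n₀)
              ∈ congrSubgroup p Cp r G (m + n₀ + 1)
          refine wd_congr hp1 hnorm hq2 hmn a.2 b.2 ?_
          simpa using hab')
    have hFinj : Function.Injective F := by
      intro x y
      refine QuotientGroup.induction_on x fun a => ?_
      refine QuotientGroup.induction_on y fun b => ?_
      intro hab
      have hab' : (QuotientGroup.mk
          (⟨(a : GL (Fin r) (integerSubring Cp)) ^ (p ^ n₀), hpm a⟩ :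
            ↥(congrSubgroup p Cp r G (m + n₀))) :
          ↥(congrSubgroup p Cp r G (m + n₀)) ⧸
            (congrSubgroup p Cp r G (m + n₀ + 1)).subgroupOf (congrSubgroup p Cp r G (m + n₀)))
          = QuotientGroup.mk ⟨(b : GL (Fin r) (integerSubring Cp)) ^ (p ^ n₀), hpm b⟩ := hab
      rw [QuotientGroup.eq, Subgroup.mem_subgroupOf] at hab'
      rw [QuotientGroup.eq, Subgroup.mem_subgroupOf]
      show (a : GL (Fin r) (integerSubring Cp))⁻¹ * (b : GL (Fin r) (integerSubring Cp))
          ∈ congrSubgroup p Cp r G (m + 1)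
      refine inj_congr hp1 hnorm hq2 hmn a.2 b.2 ?_
      simpa using hab'
    have hQ1card : Nat.card (↥(congrSubgroup p Cp r G m) ⧸
          (congrSubgroup p Cp r G (m + 1)).subgroupOf (congrSubgroup p Cp r G m))
        = (congrSubgroup p Cp r G (m + 1)).relIndex (congrSubgroup p Cp r G m) := rfl
    have hQ2card : Nat.card (↥(congrSubgroup p Cp r G (m + n₀)) ⧸
          (congrSubgroup p Cp r G (m + n₀ + 1)).subgroupOf (congrSubgroup p Cp r G (m + n₀)))
        = (congrSubgroup p Cp r G (m + n₀ + 1)).relIndex (congrSubgroup p Cp r G (m + n₀)) := rfl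
    have ha1pos : 0 < (congrSubgroup p Cp r G (m + 1)).relIndex (congrSubgroup p Cp r G m) :=
      Nat.pos_of_ne_zero fun h0 => by rw [h0, mul_zero] at t1; omega
    haveI : Finite (↥(congrSubgroup p Cp r G (m + n₀)) ⧸
        (congrSubgroup p Cp r G (m + n₀ + 1)).subgroupOf (congrSubgroup p Cp r G (m + n₀))) := by
      apply Nat.finite_of_card_ne_zero
      rw [hQ2card, ← hcard]
      omega
    have hFsurj : Function.Surjective F :=
      ((Nat.bijective_iff_injective_and_card F).mpr
        ⟨hFinj, by rw [hQ1card, hQ2card, hcard]⟩).2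
    intro x hx
    obtain ⟨y, hy⟩ := hFsurj (QuotientGroup.mk ⟨x, hx⟩)
    revert hy
    refine QuotientGroup.induction_on y fun g => ?_
    intro hy
    refine ⟨(g : GL (Fin r) (integerSubring Cp)), g.2, ?_⟩
    have hy' : (QuotientGroup.mk
        (⟨(g : GL (Fin r) (integerSubring Cp)) ^ (p ^ n₀), hpm g⟩ :
          ↥(congrSubgroup p Cp r G (m + n₀))) :
        ↥(congrSubgroup p Cp r G (m + n₀)) ⧸
          (congrSubgroup p Cp r G (m + n₀ + 1)).subgroupOf (congrSubgroup p Cp r G (m + n₀)))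
        = QuotientGroup.mk ⟨x, hx⟩ := hy
    rw [QuotientGroup.eq, Subgroup.mem_subgroupOf] at hy'
    exact hy'
  -- inclusion ⊆
  have hPsub : Subgroup.closure ((fun g => g ^ (p ^ n₀)) ''
      ((congrSubgroup p Cp r G n) : Set (GL (Fin r) (integerSubring Cp))))
      ≤ congrSubgroup p Cp r G (n + n₀) := by
    rw [Subgroup.closure_le]
    rintro y ⟨g, hg, rfl⟩
    exact pow_mem_congr hp1 hnorm hq2 (by omega) hg
  have hclosed : IsClosed ((congrSubgroup p Cp r G (n + n₀)) :
      Set (GL (Fin r) (integerSubring Cp))) := by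
    rw [congrSubgroup, Subgroup.coe_inf]
    exact IsClosed.inter hG.isClosed isClosed_ker
  refine le_antisymm (Subgroup.topologicalClosure_minimal _ hPsub hclosed) ?_
  intro x hx
  have iter : ∀ j : ℕ, ∃ h, h ∈ Subgroup.closure ((fun g => g ^ (p ^ n₀)) ''
      ((congrSubgroup p Cp r G n) : Set (GL (Fin r) (integerSubring Cp))))
      ∧ h⁻¹ * x ∈ congrSubgroup p Cp r G (n + n₀ + j) := by
    intro j
    induction j with
    | zero => exact ⟨1, one_mem _, by simpa using hx⟩
    | succ j ih =>
        obtain ⟨h, hP, hy⟩ := ih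
        have hy' : h⁻¹ * x ∈ congrSubgroup p Cp r G ((n + j) + n₀) := by
          rwa [show n + j + n₀ = n + n₀ + j from by omega]
        obtain ⟨g, hgm, hg2⟩ := key (n + j) (by omega) (h⁻¹ * x) hy'
        refine ⟨h * g ^ (p ^ n₀),
          mul_mem hP (Subgroup.subset_closure ⟨g, congr_antitone hp1 (by omega) hgm, rfl⟩), ?_⟩
        rw [_root_.mul_inv_rev, mul_assoc]
        rwa [show n + n₀ + (j + 1) = n + j + n₀ + 1 from by omega]
  choose hseq hmem hker using iter
  have hz : ∀ j, (hseq j)⁻¹ * x ∈ (glReduction p Cp r ((n + n₀) + j)).ker := fun j =>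
    (Subgroup.mem_inf.mp (hker j)).2
  have ht1 : Filter.Tendsto (fun j => ((hseq j)⁻¹ * x)⁻¹) Filter.atTop (nhds 1) :=
    tendsto_one_of_ker hp1 (fun j => ((hseq j)⁻¹ * x)⁻¹) (fun j => inv_mem (hz j))
  have hten : Filter.Tendsto hseq Filter.atTop (nhds x) := by
    have he : ∀ j, x * ((hseq j)⁻¹ * x)⁻¹ = hseq j := by
      intro j
      rw [_root_.mul_inv_rev, inv_inv, ← mul_assoc, mul_inv_cancel, one_mul]
    have h0 := Filter.Tendsto.mul (tendsto_const_nhds (x := x)) ht1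
    rw [mul_one] at h0
    exact h0.congr he
  exact mem_closure_of_tendsto hten (Filter.Eventually.of_forall hmem)
end
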